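/- Let h : [0,∞) → (0,1] be differentiable such that (log h)' is strictly increasing on (0,∞), let ℓ ≥ 2, and let x_1, ..., x_ℓ > 0. Then h(x_1) ⋯ h(x_ℓ) < h(x_1 + ⋯ + x_ℓ). -/

import Mathlib

lemma key11 (h : ℝ → ℝ) (hdiff : DifferentiableOn ℝ h (Set.Ici 0))
    (hval : ∀ x : ℝ, 0 ≤ x → h x ∈ Set.Ioc (0 : ℝ) 1)
    (hmono : StrictMonoOn (fun x => deriv h x / h x) (Set.Ioi 0))
    (a b : ℝ) (ha : 0 < a) (hb : 0 < b) : h a * h b < h (a + b) := by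
  set g : ℝ → ℝ := fun x => Real.log (h x) with hg
  have hgcont : ContinuousOn g (Set.Ici 0) :=
    hdiff.continuousOn.log (fun x hx => (hval x hx).1.ne')
  have hderiv : ∀ x ∈ Set.Ioi (0:ℝ), deriv g x = deriv h x / h x := by
    intro x hx
    have hd : DifferentiableAt ℝ h x :=
      (hdiff x (Set.mem_Ici.mpr (le_of_lt (Set.mem_Ioi.mp hx)))).differentiableAt (Ici_mem_nhds hx)
    exact (hd.hasDerivAt.log (hval x hx.le).1.ne').deriv
  have hmono' : StrictMonoOn (deriv g) (interior (Set.Ici (0:ℝ))) := by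
    rw [interior_Ici]
    intro p hp q hq hpq
    rw [hderiv p hp, hderiv q hq]
    exact hmono hp hq hpq
  have hconv : StrictConvexOn ℝ (Set.Ici (0:ℝ)) g :=
    StrictMonoOn.strictConvexOn_of_deriv (convex_Ici 0) hgcont hmono'
  have hab : 0 < a + b := by linarith
  have key : ∀ c : ℝ, 0 < c → c < a + b →
      g c < (c / (a + b)) * g (a + b) + ((a + b - c) / (a + b)) * g 0 := by
    intro c hc hcab
    have := hconv.2 (Set.mem_Ici.mpr hab.le) (Set.mem_Ici.mpr le_rfl)
      (by positivity : (0:ℝ) < a + b).ne'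
      (div_pos hc hab)
      (div_pos (show (0:ℝ) < a + b - c by linarith) hab)
      (by field_simp; ring)
    have heq : (c / (a + b)) • (a + b) + ((a + b - c) / (a + b)) • (0:ℝ) = c := by
      simp only [smul_eq_mul]; field_simp; ring
    rw [heq] at this
    simpa using this
  have h1 := key a ha (by linarith)
  have h2 := key b hb (by linarith)
  have hg0 : g 0 ≤ 0 := Real.log_nonpos (hval 0 le_rfl).1.le (hval 0 le_rfl).2
  have hsum : g a + g b < g (a + b) := by
    have h3 := add_lt_add h1 h2
    have e : a / (a + b) * g (a + b) + (a + b - a) / (a + b) * g 0 +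
        (b / (a + b) * g (a + b) + (a + b - b) / (a + b) * g 0) = g (a + b) + g 0 := by
      field_simp; ring
    linarith [h3, e, hg0]
  have hpa := (hval a ha.le).1
  have hpb := (hval b hb.le).1
  have hpab := (hval (a + b) hab.le).1
  rw [← Real.log_lt_log_iff (by positivity) hpab, Real.log_mul hpa.ne' hpb.ne']
  exact hsum

theorem stmt11 (h : ℝ → ℝ) (hdiff : DifferentiableOn ℝ h (Set.Ici 0))
    (hval : ∀ x : ℝ, 0 ≤ x → h x ∈ Set.Ioc (0 : ℝ) 1)
    (hmono : StrictMonoOn (fun x => deriv h x / h x) (Set.Ioi 0))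
    (ℓ : ℕ) (hℓ : 2 ≤ ℓ) (x : Fin ℓ → ℝ) (hx : ∀ i, 0 < x i) :
    ∏ i, h (x i) < h (∑ i, x i) := by
  obtain ⟨n, rfl⟩ : ∃ n, ℓ = n + 2 := ⟨ℓ - 2, by omega⟩
  clear hℓ
  induction n with
  | zero =>
      rw [Fin.prod_univ_two, Fin.sum_univ_two]
      exact key11 h hdiff hval hmono _ _ (hx 0) (hx 1)
  | succ n ih =>
      rw [Fin.prod_univ_succ, Fin.sum_univ_succ]
      have hsucc : ∀ i : Fin (n + 2), 0 < x i.succ := fun i => hx i.succ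
      have hIH := ih (fun i => x i.succ) hsucc
      have hspos : 0 < ∑ i : Fin (n + 2), x i.succ :=
        Finset.sum_pos (fun i _ => hsucc i) ⟨0, Finset.mem_univ 0⟩
      calc h (x 0) * ∏ i : Fin (n + 2), h (x i.succ)
          < h (x 0) * h (∑ i : Fin (n + 2), x i.succ) := by
            exact mul_lt_mul_of_pos_left hIH (hval (x 0) (hx 0).le).1
        _ < h (x 0 + ∑ i : Fin (n + 2), x i.succ) :=
            key11 h hdiff hval hmono _ _ (hx 0) hspos
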